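/- arXiv:2002.02803 — 2 statements merged into one kernel-verified Lean document; each statement's English description precedes it below -/
import Mathlib

section
/- Let $(A,N,C)$ be a positive $C^2$ steady state of the algal model (as in the full system with $p_n,p_c\in[0,1]$ and positive parameters), satisfying the three integral identities $\int_0^L(rf(N)g(C)-(m+l/Q))A\,dz=0$, $\alpha(N^0-N(L))=\int_0^L c_n(rf(N)g(C)-p_nm)A\,dz$, and $\beta(C^0-C(0))=\int_0^L(rf(N)g(C)-p_cl/Q)A\,dz$. Then $\int_0^L A(z)\,dz < \dfrac{\alpha Q N^0}{c_n l}$. -/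
theorem stmt13 (r m l Q cn alpha beta N0 C0 gn gc L pn pc : ℝ)
    (hr : 0 < r) (hm : 0 < m) (hl : 0 < l) (hQ : 0 < Q) (hcn : 0 < cn)
    (halpha : 0 < alpha) (hbeta : 0 < beta) (hN0 : 0 < N0) (hC0 : 0 < C0)
    (hgn : 0 < gn) (hgc : 0 < gc) (hL : 0 < L)
    (hpn : pn ∈ Set.Icc (0:ℝ) 1) (hpc : pc ∈ Set.Icc (0:ℝ) 1)
    (A N C : ℝ → ℝ)
    (hAc : ContinuousOn A (Set.Icc 0 L)) (hNc : ContinuousOn N (Set.Icc 0 L))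
    (hCc : ContinuousOn C (Set.Icc 0 L))
    (hApos : ∀ z ∈ Set.Icc (0:ℝ) L, 0 < A z)
    (hNpos : ∀ z ∈ Set.Icc (0:ℝ) L, 0 < N z)
    (hCpos : ∀ z ∈ Set.Icc (0:ℝ) L, 0 < C z)
    (f g : ℝ → ℝ) (hf : ∀ x, f x = x / (gn + x)) (hg : ∀ x, g x = x / (gc + x))
    (hI1 : (∫ z in (0:ℝ)..L, (r * f (N z) * g (C z) - (m + l / Q)) * A z) = 0)
    (hI2 : alpha * (N0 - N L) =
      ∫ z in (0:ℝ)..L, cn * (r * f (N z) * g (C z) - pn * m) * A z)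
    (hI3 : beta * (C0 - C 0) =
      ∫ z in (0:ℝ)..L, (r * f (N z) * g (C z) - pc * l / Q) * A z) :
    (∫ z in (0:ℝ)..L, A z) < alpha * Q * N0 / (cn * l) := by
  have huIcc : Set.uIcc (0:ℝ) L = Set.Icc 0 L := Set.uIcc_of_le hL.le
  set φ : ℝ → ℝ := fun z => r * f (N z) * g (C z) with hφ
  have hφc : ContinuousOn φ (Set.Icc 0 L) := by
    have hfN : ContinuousOn (fun z => f (N z)) (Set.Icc 0 L) := by
      simp only [hf]
      exact hNc.div (continuousOn_const.add hNc)
        (fun z hz => (add_pos hgn (hNpos z hz)).ne')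
    have hgC : ContinuousOn (fun z => g (C z)) (Set.Icc 0 L) := by
      simp only [hg]
      exact hCc.div (continuousOn_const.add hCc)
        (fun z hz => (add_pos hgc (hCpos z hz)).ne')
    exact (continuousOn_const.mul hfN).mul hgC
  have hAint : IntervalIntegrable A MeasureTheory.volume 0 L :=
    (huIcc ▸ hAc).intervalIntegrable
  have hφAint : IntervalIntegrable (fun z => φ z * A z) MeasureTheory.volume 0 L :=
    ((huIcc ▸ hφc).mul (huIcc ▸ hAc)).intervalIntegrable
  set I := ∫ z in (0:ℝ)..L, A z with hI
  set J := ∫ z in (0:ℝ)..L, φ z * A z with hJ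
  -- From hI1: J = (m + l/Q) * I
  have h1 : J - (m + l / Q) * I = 0 := by
    rw [← hI1]
    rw [hJ, hI, ← intervalIntegral.integral_const_mul,
      ← intervalIntegral.integral_sub hφAint (hAint.const_mul _)]
    congr 1; ext z; ring
  -- From hI2
  have h2 : alpha * (N0 - N L) = cn * (J - pn * m * I) := by
    rw [hI2, hJ, hI]
    have : (∫ z in (0:ℝ)..L, cn * (r * f (N z) * g (C z) - pn * m) * A z)
        = ∫ z in (0:ℝ)..L, (cn * (φ z * A z) - (cn * (pn * m)) * A z) := by
      congr 1; ext z; ring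
    rw [this, intervalIntegral.integral_sub ((hφAint.const_mul cn)) ((hAint.const_mul _)),
      intervalIntegral.integral_const_mul, intervalIntegral.integral_const_mul]
    ring
  -- I > 0
  have hIpos : 0 < I := by
    rw [hI]
    apply intervalIntegral.intervalIntegral_pos_of_pos_on hAint
    · exact fun x hx => hApos x ⟨hx.1.le, hx.2.le⟩
    · exact hL
  -- N L > 0
  have hNL : 0 < N L := hNpos L ⟨hL.le, le_refl L⟩
  have hpn1 : pn ≤ 1 := hpn.2
  -- J = (m + l/Q) * I
  have hJeq : J = (m + l / Q) * I := by linarith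
  -- key: cn * (l/Q) * I ≤ alpha * (N0 - N L) < alpha * N0
  have hkey : cn * (l / Q) * I < alpha * N0 := by
    have h3 : cn * (l / Q) * I ≤ cn * (J - pn * m * I) := by
      rw [hJeq]
      have : (l / Q) * I ≤ ((m + l / Q) * I - pn * m * I) := by
        nlinarith [mul_nonneg (mul_nonneg (sub_nonneg.2 hpn1) hm.le) hIpos.le]
      nlinarith
    have h4 : alpha * (N0 - N L) < alpha * N0 := by nlinarith
    linarith [h2 ▸ h3]
  rw [lt_div_iff₀ (by positivity)]
  have hQne : Q ≠ 0 := hQ.ne'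
  have : cn * l * I < alpha * N0 * Q := by
    have := mul_lt_mul_of_pos_right hkey hQ
    field_simp at this
    nlinarith
  nlinarith
end

section
/- Let $(A,N,C)$ be a positive $C^2$ steady state of the algal model with positive parameters, $p_n,p_c\in[0,1]$, $m<m^*:=r-l/Q$, satisfying the steady-state equations and boundary conditions, and suppose the total biomass bound $\int_0^L A\,dz < \alpha QN^0/(c_n l)$ and $0<f(N)g(C)<1$ hold. Then for every $z\in[0,L]$: $|D_nN'(z)| \le \alpha(r+p_nm^*)QN^0/l$ and $N(z) < N^0 + \alpha(r+p_nm^*)LQN^0/(D_n l)$. -/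
open Set MeasureTheory intervalIntegral

private lemma contInt_aux {f : ℝ → ℝ} {a b c d : ℝ} (hf : ContinuousOn f (Set.Icc c d))
    (h1 : c ≤ a) (h2 : a ≤ b) (h3 : b ≤ d) : IntervalIntegrable f MeasureTheory.volume a b :=
  (hf.mono (by rw [Set.uIcc_of_le h2]; exact Set.Icc_subset_Icc h1 h3)).intervalIntegrable

set_option maxHeartbeats 1000000 in

theorem stmt16 (Da Dn Dc r m l Q cn alpha beta N0 C0 gn gc L s pn pc : ℝ)
    (hDa : 0 < Da) (hDn : 0 < Dn) (hDc : 0 < Dc) (hr : 0 < r) (hm : 0 < m)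
    (hl : 0 < l) (hQ : 0 < Q) (hcn : 0 < cn) (halpha : 0 < alpha) (hbeta : 0 < beta)
    (hN0 : 0 < N0) (hC0 : 0 < C0) (hgn : 0 < gn) (hgc : 0 < gc) (hL : 0 < L)
    (hpn : pn ∈ Set.Icc (0:ℝ) 1) (hpc : pc ∈ Set.Icc (0:ℝ) 1)
    (hmstar : m < r - l / Q)
    (A A' A'' N N' N'' C C' C'' : ℝ → ℝ)
    (hApos : ∀ z ∈ Set.Icc (0:ℝ) L, 0 < A z)
    (hNpos : ∀ z ∈ Set.Icc (0:ℝ) L, 0 < N z)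
    (hCpos : ∀ z ∈ Set.Icc (0:ℝ) L, 0 < C z)
    (hA1 : ∀ z ∈ Set.Icc (0:ℝ) L, HasDerivAt A (A' z) z)
    (hA2 : ∀ z ∈ Set.Icc (0:ℝ) L, HasDerivAt A' (A'' z) z)
    (hN1 : ∀ z ∈ Set.Icc (0:ℝ) L, HasDerivAt N (N' z) z)
    (hN2 : ∀ z ∈ Set.Icc (0:ℝ) L, HasDerivAt N' (N'' z) z)
    (hC1 : ∀ z ∈ Set.Icc (0:ℝ) L, HasDerivAt C (C' z) z)
    (hC2 : ∀ z ∈ Set.Icc (0:ℝ) L, HasDerivAt C' (C'' z) z)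
    (f g : ℝ → ℝ) (hf : ∀ x, f x = x / (gn + x)) (hg : ∀ x, g x = x / (gc + x))
    (hodeA : ∀ z ∈ Set.Ioo (0:ℝ) L,
      Da * A'' z - s * A' z + (r * f (N z) * g (C z) - (m + l / Q)) * A z = 0)
    (hodeN : ∀ z ∈ Set.Ioo (0:ℝ) L,
      Dn * N'' z + cn * (pn * m - r * f (N z) * g (C z)) * A z = 0)
    (hodeC : ∀ z ∈ Set.Ioo (0:ℝ) L,
      Dc * C'' z + (pc * l / Q - r * f (N z) * g (C z)) * A z = 0)
    (hbA0 : Da * A' 0 - s * A 0 = 0) (hbAL : Da * A' L - s * A L = 0)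
    (hbN0 : N' 0 = 0) (hbNL : Dn * N' L = alpha * (N0 - N L))
    (hbC0 : Dc * C' 0 = beta * (C 0 - C0)) (hbCL : C' L = 0)
    (hbiomass : (∫ z in (0:ℝ)..L, A z) < alpha * Q * N0 / (cn * l)) :
    ∀ z ∈ Set.Icc (0:ℝ) L,
      |Dn * N' z| ≤ alpha * (r + pn * (r - l / Q)) * Q * N0 / l ∧
      N z < N0 + alpha * (r + pn * (r - l / Q)) * L * Q * N0 / (Dn * l) := by
  obtain ⟨hpn0, hpn1⟩ := hpn
  have hlQ : 0 < l / Q := div_pos hl hQ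
  have hms0 : (0:ℝ) < r - l / Q := lt_trans hm hmstar
  set K : ℝ := r + pn * (r - l / Q) with hKdef
  have hK0 : 0 < K := by positivity
  clear_value K
  -- continuity
  have contA : ContinuousOn A (Icc 0 L) := fun z hz => (hA1 z hz).continuousAt.continuousWithinAt
  have contA' : ContinuousOn A' (Icc 0 L) := fun z hz => (hA2 z hz).continuousAt.continuousWithinAt
  have contN : ContinuousOn N (Icc 0 L) := fun z hz => (hN1 z hz).continuousAt.continuousWithinAt
  have contN' : ContinuousOn N' (Icc 0 L) := fun z hz => (hN2 z hz).continuousAt.continuousWithinAt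
  have contC : ContinuousOn C (Icc 0 L) := fun z hz => (hC1 z hz).continuousAt.continuousWithinAt
  set F : ℝ → ℝ := fun t => r * f (N t) * g (C t) with hFdef
  have contF : ContinuousOn F (Icc 0 L) := by
    have e : ∀ t ∈ Icc (0:ℝ) L, r * (N t / (gn + N t)) * (C t / (gc + C t)) = F t := by
      intro t ht; simp [hFdef, hf, hg]
    refine ContinuousOn.congr ?_ fun t ht => (e t ht).symm
    refine ((continuousOn_const.mul (contN.div (continuousOn_const.add contN) ?_)).mul
      (contC.div (continuousOn_const.add contC) ?_))
    · intro t ht; have := hNpos t ht; show gn + N t ≠ 0; positivity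
    · intro t ht; have := hCpos t ht; positivity
  have hFb : ∀ t ∈ Icc (0:ℝ) L, 0 < F t ∧ F t < r := by
    intro t ht
    have hN := hNpos t ht; have hC := hCpos t ht
    have h1 : N t / (gn + N t) < 1 := (div_lt_one (by positivity)).2 (by linarith)
    have h2 : C t / (gc + C t) < 1 := (div_lt_one (by positivity)).2 (by linarith)
    have h1' : 0 < N t / (gn + N t) := by positivity
    have h2' : 0 < C t / (gc + C t) := by positivity
    constructor
    · simp only [hFdef, hf, hg]; positivity
    · simp only [hFdef, hf, hg]
      have e1 := mul_lt_of_lt_one_right (mul_pos hr h1') h2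
      have e2 := mul_lt_of_lt_one_right hr h1
      linarith
  have habsF : ∀ t ∈ Icc (0:ℝ) L, |F t - pn * m| ≤ K := by
    intro t ht
    obtain ⟨h0, h1⟩ := hFb t ht
    have hpm : pn * m ≤ pn * (r - l / Q) := by nlinarith
    have hpm0 : 0 ≤ pn * (r - l / Q) := by positivity
    have hpm1 : 0 ≤ pn * m := by positivity
    rw [abs_le]; constructor <;> [linarith; linarith]
  set h : ℝ → ℝ := fun t => cn * (F t - pn * m) * A t with hhdef
  have conth : ContinuousOn h (Icc 0 L) :=
    (continuousOn_const.mul (contF.sub continuousOn_const)).mul contA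
  -- flux identity
  have flux : ∀ z ∈ Icc (0:ℝ) L, Dn * N' z = ∫ t in (0:ℝ)..z, h t := by
    intro z hz
    obtain ⟨hz0, hzL⟩ := hz
    have hsub : Icc (0:ℝ) z ⊆ Icc 0 L := Icc_subset_Icc le_rfl hzL
    have huicc : uIcc (0:ℝ) z = Icc 0 z := uIcc_of_le hz0
    have key : (∫ t in (0:ℝ)..z, h t) = Dn * N' z - Dn * N' 0 := by
      apply integral_eq_sub_of_hasDeriv_right (f := fun t => Dn * N' t) (f' := h)
      · rw [huicc]; exact continuousOn_const.mul (contN'.mono hsub)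
      · rw [min_eq_left hz0, max_eq_right hz0]
        intro x hx
        have hxL : x ∈ Ioo (0:ℝ) L := ⟨hx.1, lt_of_lt_of_le hx.2 hzL⟩
        have hxI : x ∈ Icc (0:ℝ) L := ⟨le_of_lt hxL.1, le_of_lt hxL.2⟩
        have hd : HasDerivAt (fun t => Dn * N' t) (Dn * N'' x) x := (hN2 x hxI).const_mul Dn
        have heq : h x = Dn * N'' x := by
          have e := hodeN x hxL
          simp only [hhdef, hFdef]; linarith [e]
        rw [heq]
        exact hd.hasDerivWithinAt
      · exact contInt_aux conth le_rfl hz0 hzL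
    rw [key, hbN0, mul_zero, sub_zero]
  -- integrability facts on [0,L]
  have huL : uIcc (0:ℝ) L = Icc 0 L := uIcc_of_le hL.le
  have intA : IntervalIntegrable A volume 0 L := contInt_aux contA le_rfl hL.le le_rfl
  have intApos : 0 < ∫ t in (0:ℝ)..L, A t := by
    apply intervalIntegral_pos_of_pos_on intA _ hL
    intro x hx
    exact hApos x ⟨hx.1.le, hx.2.le⟩
  -- uniform flux bound
  have fluxbound : ∀ z ∈ Icc (0:ℝ) L, |Dn * N' z| ≤ cn * K * ∫ t in (0:ℝ)..L, A t := by
    intro z hz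
    obtain ⟨hz0, hzL⟩ := hz
    have hsub : Icc (0:ℝ) z ⊆ Icc 0 L := Icc_subset_Icc le_rfl hzL
    have huicc : uIcc (0:ℝ) z = Icc 0 z := uIcc_of_le hz0
    have inth : IntervalIntegrable h volume 0 z := contInt_aux conth le_rfl hz0 hzL
    have intAz : IntervalIntegrable A volume 0 z := contInt_aux contA le_rfl hz0 hzL
    rw [flux z ⟨hz0, hzL⟩]
    calc |∫ t in (0:ℝ)..z, h t| ≤ ∫ t in (0:ℝ)..z, |h t| :=
          abs_integral_le_integral_abs hz0
      _ ≤ ∫ t in (0:ℝ)..z, cn * K * A t := by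
          apply integral_mono_on hz0 inth.abs (intAz.const_mul _)
          intro x hx
          have hxI : x ∈ Icc (0:ℝ) L := hsub hx
          have hA := hApos x hxI
          have := habsF x hxI
          simp only [hhdef]
          rw [abs_mul, abs_mul, abs_of_pos hcn, abs_of_pos hA]
          have hck : cn * |F x - pn * m| ≤ cn * K :=
            mul_le_mul_of_nonneg_left this hcn.le
          exact mul_le_mul_of_nonneg_right hck hA.le
      _ ≤ ∫ t in (0:ℝ)..L, cn * K * A t := by
          have intAz' : IntervalIntegrable (fun t => cn * K * A t) volume 0 z :=
            intAz.const_mul _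
          have intAzL : IntervalIntegrable (fun t => cn * K * A t) volume z L :=
            (contInt_aux contA hz0 hzL le_rfl).const_mul _
          rw [← integral_add_adjacent_intervals intAz' intAzL]
          have : 0 ≤ ∫ t in z..L, cn * K * A t := by
            apply intervalIntegral.integral_nonneg hzL
            intro x hx
            have hA := hApos x ⟨le_trans hz0 hx.1, hx.2⟩
            positivity
          linarith
      _ = cn * K * ∫ t in (0:ℝ)..L, A t := integral_const_mul _ _
  have hBval : cn * K * (alpha * Q * N0 / (cn * l)) = alpha * K * Q * N0 / l := by
    field_simp
  have fluxB : ∀ z ∈ Icc (0:ℝ) L, |Dn * N' z| < alpha * K * Q * N0 / l := by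
    intro z hz
    have h1 := fluxbound z hz
    have h2 : cn * K * (∫ t in (0:ℝ)..L, A t) < cn * K * (alpha * Q * N0 / (cn * l)) := by
      apply mul_lt_mul_of_pos_left hbiomass (by positivity)
    rw [hBval] at h2; linarith
  -- N L < N0
  have hNL : N L < N0 := by
    have intX : IntervalIntegrable (fun t => (F t - (m + l / Q)) * A t) volume 0 L :=
      contInt_aux ((contF.sub continuousOn_const).mul contA) le_rfl hL.le le_rfl
    have intsA' : IntervalIntegrable (fun t => s * A' t) volume 0 L :=
      (contInt_aux contA' le_rfl hL.le le_rfl).const_mul _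
    have eq1 : (∫ t in (0:ℝ)..L, (s * A' t - (F t - (m + l / Q)) * A t)) =
        Da * A' L - Da * A' 0 := by
      apply integral_eq_sub_of_hasDeriv_right (f := fun t => Da * A' t)
      · rw [huL]; exact continuousOn_const.mul contA'
      · rw [min_eq_left hL.le, max_eq_right hL.le]
        intro x hx
        have hxI : x ∈ Icc (0:ℝ) L := ⟨hx.1.le, hx.2.le⟩
        have hd : HasDerivAt (fun t => Da * A' t) (Da * A'' x) x := (hA2 x hxI).const_mul Da
        have heq : s * A' x - (F x - (m + l / Q)) * A x = Da * A'' x := by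
          have e := hodeA x hx
          simp only [hFdef]; linarith [e]
        rw [heq]; exact hd.hasDerivWithinAt
      · exact intsA'.sub intX
    have eq2 : (∫ t in (0:ℝ)..L, s * A' t) = s * A L - s * A 0 := by
      apply integral_eq_sub_of_hasDerivAt (f := fun t => s * A t)
      · intro x hx
        rw [huL] at hx
        exact (hA1 x hx).const_mul s
      · exact intsA'
    have eq3 : (∫ t in (0:ℝ)..L, (F t - (m + l / Q)) * A t) = 0 := by
      rw [integral_sub intsA' intX] at eq1
      rw [eq2] at eq1
      linarith
    have eq4 : Dn * N' L = cn * (m + l / Q - pn * m) * ∫ t in (0:ℝ)..L, A t := by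
      rw [flux L ⟨hL.le, le_rfl⟩]
      have e : ∀ t ∈ uIcc (0:ℝ) L, h t =
          cn * ((F t - (m + l / Q)) * A t) + (cn * (m + l / Q - pn * m)) * A t := by
        intro t _; simp only [hhdef]; ring
      rw [integral_congr e, integral_add (intX.const_mul _) (intA.const_mul _),
        intervalIntegral.integral_const_mul, intervalIntegral.integral_const_mul, eq3]
      ring
    have hcoef : 0 < cn * (m + l / Q - pn * m) := by
      nlinarith [mul_nonneg (sub_nonneg.2 hpn1) hm.le]
    have : 0 < Dn * N' L := by rw [eq4]; positivity
    rw [hbNL] at this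
    by_contra hcon
    push_neg at hcon
    nlinarith
  -- conclusion
  intro z hz
  obtain ⟨hz0, hzL⟩ := hz
  constructor
  · exact le_of_lt (fluxB z ⟨hz0, hzL⟩)
  · -- N z = N L - ∫ z..L N'
    have huzL : uIcc z L = Icc z L := uIcc_of_le hzL
    have hsub : Icc z L ⊆ Icc 0 L := Icc_subset_Icc hz0 le_rfl
    have intN' : IntervalIntegrable N' volume z L := contInt_aux contN' hz0 hzL le_rfl
    have eqN : (∫ t in z..L, N' t) = N L - N z := by
      apply integral_eq_sub_of_hasDerivAt
      · intro x hx
        rw [huzL] at hx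
        exact hN1 x (hsub hx)
      · exact intN'
    set B : ℝ := alpha * K * Q * N0 / l with hBdef
    have hB0 : 0 < B := by positivity
    have hbnd : |∫ t in z..L, N' t| ≤ B / Dn * |L - z| := by
      rw [← Real.norm_eq_abs]
      apply intervalIntegral.norm_integral_le_of_norm_le_const
      intro x hx
      rw [uIoc_of_le hzL] at hx
      have hxI : x ∈ Icc (0:ℝ) L := ⟨le_trans hz0 hx.1.le, hx.2⟩
      have := fluxB x hxI
      rw [abs_mul, abs_of_pos hDn] at this
      rw [Real.norm_eq_abs, le_div_iff₀ hDn]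
      nlinarith [abs_nonneg (N' x)]
    have habs : |L - z| ≤ L := by rw [abs_of_nonneg (by linarith)]; linarith
    have h1 : N z ≤ N L + B / Dn * L := by
      have h2 : N L - N z ≥ -(B / Dn * |L - z|) := by
        rw [← eqN]
        have := (abs_le.mp hbnd).1
        linarith
      have h3 : B / Dn * |L - z| ≤ B / Dn * L := by
        apply mul_le_mul_of_nonneg_left habs (by positivity)
      linarith
    have hfin : B / Dn * L = alpha * K * L * Q * N0 / (Dn * l) := by
      rw [hBdef]; field_simp
    rw [hfin] at h1
    linarith
end
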